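/- For all integers m ≥ 0, s ≥ -1, k ≥ m-1, the commutator in U(W_{≥-1}) satisfies [e_2, Ω^m_{k,s}] = (k-2) Ω^m_{k+2,s} + m Ω^m_{k+1,s+1} + (s-2+m) Ω^m_{k,s+2}. -/

import Mathlib

noncomputable section

/-- Index set `{i : ℤ | i ≥ -1}` of the basis `e_i` of the one-sided Witt algebra. -/
abbrev WIdx : Type := {i : ℤ // -1 ≤ i}

/-- The defining relations `e_i e_j = e_j e_i + (j - i) e_{i+j}` of the universal
enveloping algebra of the one-sided Witt algebra `W_{≥ -1}`. -/
inductive wittRel (k : Type) [Field k] :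
    FreeAlgebra k WIdx → FreeAlgebra k WIdx → Prop
  | rel (i j : WIdx) (h : -1 ≤ i.1 + j.1) :
      wittRel k (FreeAlgebra.ι k i * FreeAlgebra.ι k j)
        (FreeAlgebra.ι k j * FreeAlgebra.ι k i +
          (j.1 - i.1) • FreeAlgebra.ι k (⟨i.1 + j.1, h⟩ : WIdx))

/-- The universal enveloping algebra `U(W_{≥ -1})`, presented by generators `e_i` (`i ≥ -1`)
and the relations `[e_i, e_j] = (j - i) e_{i+j}`. -/
abbrev UW (k : Type) [Field k] := RingQuot (wittRel k)

/-- The generator `e_i` of `U(W_{≥ -1})` (junk value `0` for `i < -1`). -/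
def eW (k : Type) [Field k] (i : ℤ) : UW k :=
  if h : -1 ≤ i then RingQuot.mkAlgHom k (wittRel k) (FreeAlgebra.ι k ⟨i, h⟩) else 0

/-- The differentiators: `Ω^0_{k,s} = e_k e_s`, `Ω^{m+1}_{k,s} = Ω^m_{k,s} - Ω^m_{k-1,s+1}`. -/
def Ω (k : Type) [Field k] : ℕ → ℤ → ℤ → UW k
  | 0, a, s => eW k a * eW k s
  | m + 1, a, s => Ω k m a s - Ω k m (a - 1) (s + 1)

lemma eW_comm (k : Type) [Field k] (i j : ℤ) (hi : -1 ≤ i) (hj : -1 ≤ j)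
    (h : -1 ≤ i + j) :
    eW k i * eW k j = eW k j * eW k i + (j - i) • eW k (i + j) := by
  simp only [eW, dif_pos hi, dif_pos hj, dif_pos h]
  rw [← map_mul, RingQuot.mkAlgHom_rel k (wittRel.rel ⟨i, hi⟩ ⟨j, hj⟩ h)]
  simp

lemma eW_comm2 (k : Type) [Field k] (j : ℤ) (hj : -1 ≤ j) :
    eW k 2 * eW k j - eW k j * eW k 2 = (j - 2) • eW k (j + 2) := by
  have h : (-1 : ℤ) ≤ 2 + j := by omega
  rw [eW_comm k 2 j (by norm_num) hj h, show (2 : ℤ) + j = j + 2 by ring]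
  abel

/-- `[e_2, Ω^m_{k,s}] = (k-2) Ω^m_{k+2,s} + m Ω^m_{k+1,s+1} + (s-2+m) Ω^m_{k,s+2}`
in `U(W_{≥-1})`. -/
theorem comm_e_two_omega (k : Type) [Field k] [CharZero k]
    (m : ℕ) (s a : ℤ) (hs : -1 ≤ s) (ha : (m : ℤ) - 1 ≤ a) :
    eW k 2 * Ω k m a s - Ω k m a s * eW k 2
      = (a - 2) • Ω k m (a + 2) s + (m : ℤ) • Ω k m (a + 1) (s + 1)
          + (s - 2 + m) • Ω k m a (s + 2) := by
  induction m generalizing a s with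
  | zero =>
    have ha' : (-1 : ℤ) ≤ a := by omega
    have c1 := eW_comm2 k a ha'
    have c2 := eW_comm2 k s hs
    simp only [Ω, Nat.cast_zero, zero_smul, add_zero]
    have key : eW k 2 * (eW k a * eW k s) - eW k a * eW k s * eW k 2
        = (eW k 2 * eW k a - eW k a * eW k 2) * eW k s
          + eW k a * (eW k 2 * eW k s - eW k s * eW k 2) := by
          simp only [mul_sub, sub_mul, mul_assoc]; abel
    rw [key, c1, c2, smul_mul_assoc, mul_smul_comm]
    simp
  | succ m ih =>
    have h1 := ih s a hs (by push_cast at ha ⊢; omega)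
    have h2 := ih (s + 1) (a - 1) (by omega) (by push_cast at ha ⊢; omega)
    have r1 : a - 1 + 2 = a + 1 := by ring
    have r2 : a - 1 + 1 = a := by ring
    have r3 : s + 1 + 1 = s + 2 := by ring
    have r4 : s + 1 + 2 = s + 3 := by ring
    rw [r1, r2, r3, r4] at h2
    simp only [Ω]
    have rr1 : a + 2 - 1 = a + 1 := by ring
    have rr2 : a + 1 - 1 = a := by ring
    have rr3 : a - 1 + 1 = a := by ring
    have rr4 : s + 2 + 1 = s + 3 := by ring
    have rr5 : s + 1 + 1 = s + 2 := by ring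
    rw [rr1, rr2, rr4, rr5]
    have expand : eW k 2 * (Ω k m a s - Ω k m (a - 1) (s + 1))
        - (Ω k m a s - Ω k m (a - 1) (s + 1)) * eW k 2
        = (eW k 2 * Ω k m a s - Ω k m a s * eW k 2)
          - (eW k 2 * Ω k m (a - 1) (s + 1) - Ω k m (a - 1) (s + 1) * eW k 2) := by
      simp only [mul_sub, sub_mul]; abel
    rw [expand, h1, h2]
    push_cast
    module
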